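/- There exists a G_δ set G ⊆ ω^ω × X such that every vertical section G_x is a comeager G_δ subset of X, and for every comeager G_δ set H ⊆ X there is x ∈ ω^ω with G_x = H; consequently, the complement of G is an F_σ universal set for the σ-ideal of meager subsets of X (i.e., its sections are meager and form a base of the meager ideal). -/

import Mathlib

open Set TopologicalSpace

/-- A set is F_σ if it is a countable union of closed sets. -/
def IsFsigma {X : Type*} [TopologicalSpace X] (s : Set X) : Prop :=
  ∃ F : ℕ → Set X, (∀ n, IsClosed (F n)) ∧ s = ⋃ n, F n

section Aux

variable {X : Type*} [TopologicalSpace X]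

/-- `{p | p.2 ∈ g (p.1 m)}` is open when each `g v` is open. -/
lemma aux_open_section (m : ℕ) (g : ℕ → Set X) (hg : ∀ v, IsOpen (g v)) :
    IsOpen {p : (ℕ → ℕ) × X | p.2 ∈ g (p.1 m)} := by
  have : {p : (ℕ → ℕ) × X | p.2 ∈ g (p.1 m)} =
      ⋃ v : ℕ, ((fun x : ℕ → ℕ => x m) ⁻¹' {v}) ×ˢ g v := by
    ext p
    simp [Set.mem_iUnion, Set.mem_prod, eq_comm]
  rw [this]
  refine isOpen_iUnion fun v => IsOpen.prod ?_ (hg v)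
  exact (continuous_apply m).isOpen_preimage _ (isOpen_discrete _)

end Aux

/-- For an uncountable Polish space `X`, there is a G_δ set `G ⊆ ω^ω × X` whose
vertical sections are exactly (cofinally) the comeager G_δ subsets of `X`; its
complement is an F_σ universal set for the σ-ideal of meager subsets of `X`:
all its sections are meager and every meager set is contained in some section. -/
theorem exists_Gdelta_universal_comeager
    (X : Type*) [TopologicalSpace X] [PolishSpace X] [Uncountable X] :
    ∃ G : Set ((ℕ → ℕ) × X), IsGδ G ∧
      (∀ x : ℕ → ℕ, IsGδ {y : X | (x, y) ∈ G} ∧ {y : X | (x, y) ∈ G} ∈ residual X) ∧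
      (∀ H : Set X, IsGδ H → H ∈ residual X → ∃ x : ℕ → ℕ, {y : X | (x, y) ∈ G} = H) ∧
      IsFsigma Gᶜ ∧
      (∀ x : ℕ → ℕ, IsMeagre {y : X | (x, y) ∈ Gᶜ}) ∧
      ∀ A : Set X, IsMeagre A → ∃ x : ℕ → ℕ, A ⊆ {y : X | (x, y) ∈ Gᶜ} := by
  classical
  letI := upgradeIsCompletelyMetrizable X
  have hXne : Nonempty X := inferInstance
  obtain ⟨b, bcount, bne, bbasis⟩ := exists_countable_basis X
  -- b is nonempty
  have hbne : b.Nonempty := by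
    rcases Set.eq_empty_or_nonempty b with h | h
    · exfalso
      have h2 := bbasis.sUnion_eq
      rw [h, Set.sUnion_empty] at h2
      obtain ⟨x⟩ := hXne
      have : x ∈ (∅ : Set X) := by rw [h2]; trivial
      exact Set.notMem_empty x this
    · exact h
  obtain ⟨e, he⟩ := bcount.exists_eq_range hbne
  have emem : ∀ n, e n ∈ b := fun n => he ▸ Set.mem_range_self n
  have eopen : ∀ n, IsOpen (e n) := fun n => bbasis.isOpen (emem n)
  have enon : ∀ n, (e n).Nonempty := fun n => by
    rcases Set.eq_empty_or_nonempty (e n) with h | h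
    · exact absurd (h ▸ emem n) bne
    · exact h
  -- basis property in terms of e
  have ebasis : ∀ (U : Set X), IsOpen U → ∀ y ∈ U, ∃ n, y ∈ e n ∧ e n ⊆ U := by
    intro U hU y hy
    obtain ⟨v, hvb, hyv, hvU⟩ := bbasis.exists_subset_of_mem_open hy hU
    rw [he] at hvb
    obtain ⟨n, rfl⟩ := hvb
    exact ⟨n, hyv, hvU⟩
  -- the "density guard" sets
  set C : ℕ → ℕ → Set X := fun k v => if e v ⊆ e k then e v else e k with hC
  have Copen : ∀ k v, IsOpen (C k v) := by
    intro k v; rw [hC]; dsimp only; split <;> exact eopen _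
  have Csub : ∀ k v, C k v ⊆ e k := by
    intro k v; rw [hC]; dsimp only; split
    · assumption
    · exact subset_rfl
  have Cnon : ∀ k v, (C k v).Nonempty := by
    intro k v; rw [hC]; dsimp only; split <;> exact enon _
  -- sections' building blocks
  set D : ℕ → (ℕ → ℕ) → Set X := fun n x =>
    ⋃ k, (e (x (Nat.pair n (2 * k))) ∪ C k (x (Nat.pair n (2 * k + 1)))) with hD
  have Dopen : ∀ n x, IsOpen (D n x) := fun n x =>
    isOpen_iUnion fun k => (eopen _).union (Copen _ _)
  have Ddense : ∀ n x, Dense (D n x) := by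
    intro n x
    rw [dense_iff_inter_open]
    intro U hU ⟨y, hy⟩
    obtain ⟨k, _, hkU⟩ := ebasis U hU y hy
    obtain ⟨z, hz⟩ := Cnon k (x (Nat.pair n (2 * k + 1)))
    exact ⟨z, hkU (Csub _ _ hz), Set.mem_iUnion.2 ⟨k, Or.inr hz⟩⟩
  -- the universal Gδ set
  set O : ℕ → Set ((ℕ → ℕ) × X) := fun n => {p | p.2 ∈ D n p.1} with hO
  have Oopen : ∀ n, IsOpen (O n) := by
    intro n
    have : O n = ⋃ k, ({p : (ℕ → ℕ) × X | p.2 ∈ e (p.1 (Nat.pair n (2 * k)))} ∪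
        {p : (ℕ → ℕ) × X | p.2 ∈ C k (p.1 (Nat.pair n (2 * k + 1)))}) := by
      ext p
      simp only [hO, hD, Set.mem_setOf_eq, Set.mem_iUnion, Set.mem_union]
    rw [this]
    exact isOpen_iUnion fun k =>
      (aux_open_section _ e eopen).union (aux_open_section _ (C k) (Copen k))
  have hsecD : ∀ x : ℕ → ℕ, {y : X | (x, y) ∈ ⋂ n, O n} = ⋂ n, D n x := by
    intro x; ext y; simp [hO]
  have hres : ∀ x : ℕ → ℕ, (⋂ n, D n x) ∈ residual X := fun x =>
    countable_iInter_mem.2 fun n =>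
      residual_of_dense_Gδ (Dopen n x).isGδ (Ddense n x)
  have hsurj : ∀ H : Set X, IsGδ H → H ∈ residual X →
      ∃ x : ℕ → ℕ, {y : X | (x, y) ∈ ⋂ n, O n} = H := by
    intro H hHGδ hHres
    obtain ⟨W, Wopen, hHW⟩ := hHGδ.eq_iInter_nat
    have Wdense : ∀ n, Dense (W n) := by
      intro n
      refine dense_of_mem_residual (Filter.mem_of_superset hHres ?_)
      rw [hHW]; exact Set.iInter_subset _ n
    -- for each n, build a code whose section-piece equals W n
    have key : ∀ n, ∃ c : ℕ → ℕ,
        (⋃ k, (e (c (2 * k)) ∪ C k (c (2 * k + 1)))) = W n := by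
      intro n
      have Wne : (W n).Nonempty := (Wdense n).nonempty
      obtain ⟨y0, hy0⟩ := Wne
      obtain ⟨s0, _, hs0⟩ := ebasis (W n) (Wopen n) y0 hy0
      -- guard codes: a basic set inside e k ∩ W n
      have guard : ∀ k, ∃ m, e m ⊆ e k ∧ e m ⊆ W n := by
        intro k
        obtain ⟨z, hz⟩ := (Wdense n).inter_open_nonempty (e k) (eopen k) (enon k)
        obtain ⟨m, _, hm⟩ := ebasis (e k ∩ W n) ((eopen k).inter (Wopen n)) z
          ⟨hz.1, hz.2⟩
        exact ⟨m, fun w hw => (hm hw).1, fun w hw => (hm hw).2⟩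
      choose g hg1 hg2 using guard
      have h2k : ∀ k : ℕ, (2 * k) / 2 = k := fun k => by omega
      have h2k1 : ∀ k : ℕ, (2 * k + 1) / 2 = k := fun k => by omega
      set c : ℕ → ℕ :=
        fun j => if Even j then (if e (j / 2) ⊆ W n then j / 2 else s0) else g (j / 2)
        with hcdef
      have hceven : ∀ k, c (2 * k) = if e k ⊆ W n then k else s0 := by
        intro k
        simp only [hcdef]
        rw [if_pos (even_two_mul k), h2k]
      have hcodd : ∀ k, c (2 * k + 1) = g k := by
        intro k
        simp only [hcdef]
        rw [if_neg (fun h => (Nat.even_add_one.1 h) (even_two_mul k)), h2k1]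
      refine ⟨c, ?_⟩
      apply Set.Subset.antisymm
      · refine Set.iUnion_subset fun k => Set.union_subset ?_ ?_
        · rw [hceven k]
          split
          · assumption
          · exact hs0
        · rw [hcodd k]
          have hCk : C k (g k) = e (g k) := by
            simp only [hC]
            exact if_pos (hg1 k)
          rw [hCk]
          exact hg2 k
      · intro y hy
        obtain ⟨k, hyk, hkW⟩ := ebasis (W n) (Wopen n) y hy
        refine Set.mem_iUnion.2 ⟨k, Or.inl ?_⟩
        rw [hceven k, if_pos hkW]
        exact hyk
    choose c hc using key
    refine ⟨fun m => c (Nat.unpair m).1 (Nat.unpair m).2, ?_⟩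
    have hxval : ∀ n j, c (Nat.unpair (Nat.pair n j)).1 (Nat.unpair (Nat.pair n j)).2
        = c n j := by intro n j; rw [Nat.unpair_pair]
    have hDn : ∀ n, D n (fun m => c (Nat.unpair m).1 (Nat.unpair m).2) = W n := by
      intro n
      rw [hD]
      dsimp only
      have : ∀ k, c (Nat.unpair (Nat.pair n (2 * k))).1 (Nat.unpair (Nat.pair n (2 * k))).2
          = c n (2 * k) := fun k => hxval n (2 * k)
      calc (⋃ k, (e (c (Nat.unpair (Nat.pair n (2 * k))).1 (Nat.unpair (Nat.pair n (2 * k))).2)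
              ∪ C k (c (Nat.unpair (Nat.pair n (2 * k + 1))).1
                  (Nat.unpair (Nat.pair n (2 * k + 1))).2)))
          = ⋃ k, (e (c n (2 * k)) ∪ C k (c n (2 * k + 1))) := by
            apply Set.iUnion_congr
            intro k
            rw [hxval n (2 * k), hxval n (2 * k + 1)]
        _ = W n := hc n
    ext y
    simp only [Set.mem_setOf_eq, Set.mem_iInter, hO, hHW]
    constructor
    · intro h n; rw [← hDn n]; exact h n
    · intro h n; have := h n; rw [← hDn n] at this; exact this
  refine ⟨⋂ n, O n, ?_, ?_, ?_, ?_, ?_, ?_⟩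
  · exact IsGδ.iInter_of_isOpen Oopen
  · intro x
    rw [hsecD x]
    exact ⟨IsGδ.iInter_of_isOpen fun n => Dopen n x, hres x⟩
  · exact hsurj
  · refine ⟨fun n => (O n)ᶜ, fun n => (Oopen n).isClosed_compl, ?_⟩
    rw [Set.compl_iInter]
  · intro x
    have h1 : {y : X | (x, y) ∈ (⋂ n, O n)ᶜ} = {y : X | (x, y) ∈ ⋂ n, O n}ᶜ := by
      ext y; simp
    rw [IsMeagre, h1, compl_compl, hsecD x]
    exact hres x
  · intro A hA
    rw [IsMeagre] at hA
    obtain ⟨H, hHA, hHGδ, hHd⟩ := mem_residual.1 hA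
    obtain ⟨x, hx⟩ := hsurj H hHGδ (residual_of_dense_Gδ hHGδ hHd)
    refine ⟨x, fun y hy => ?_⟩
    simp only [Set.mem_setOf_eq, Set.mem_compl_iff]
    intro hmem
    have hyH : y ∈ H := hx ▸ hmem
    exact (hHA hyH) hy
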